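/- Let H be a nonnegative real-valued random variable on a probability space (Ω, 𝓕, ℙ) and let t ≥ 0. For real numbers 0 < m₁ ≤ m₂, if exp((t/m₁)·H) is integrable, then (E[exp((t/m₂)·H)])^{m₂} ≤ (E[exp((t/m₁)·H)])^{m₁}. That is, the function m ↦ (E[exp((t/m)·H)])^m is nonincreasing on (0, ∞). -/

import Mathlib

open MeasureTheory Real

/-- **Monotonicity of the MGF of the sample average in the sample size**
(Theorem 1 of the paper, second part). For a nonnegative random variable `H` and `t ≥ 0`,
the function `m ↦ (E[exp ((t/m) * H)])^m` is nonincreasing on `(0, ∞)`: for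
`0 < m₁ ≤ m₂` with `exp ((t/m₁) * H)` integrable,
`(E[exp ((t/m₂) * H)])^m₂ ≤ (E[exp ((t/m₁) * H)])^m₁` (real powers). -/
theorem mgf_sample_average_antitone_in_sample_size
    {Ω : Type*} [MeasurableSpace Ω] (P : Measure Ω) [IsProbabilityMeasure P]
    (H : Ω → ℝ) (hmeas : Measurable H) (hnonneg : ∀ ω, 0 ≤ H ω)
    (t : ℝ) (ht : 0 ≤ t)
    (m₁ m₂ : ℝ) (hm₁ : 0 < m₁) (hm : m₁ ≤ m₂)
    (hint : Integrable (fun ω => Real.exp ((t / m₁) * H ω)) P) :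
    (∫ ω, Real.exp ((t / m₂) * H ω) ∂P) ^ m₂ ≤ (∫ ω, Real.exp ((t / m₁) * H ω) ∂P) ^ m₁ := by
  have hm₂ : 0 < m₂ := hm₁.trans_le hm
  set c : ℝ := m₁ / m₂ with hc
  have hc0 : 0 < c := div_pos hm₁ hm₂
  have hc1 : c ≤ 1 := (div_le_one hm₂).mpr hm
  -- rewrite the m₂-integrand as (exp ((t/m₁) H))^c
  have hkey : ∀ ω, Real.exp ((t / m₂) * H ω) = (Real.exp ((t / m₁) * H ω)) ^ c := by
    intro ω
    rw [← Real.exp_mul]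
    rw [hc]
    field_simp
  -- Jensen's inequality with the concave function x ↦ x^c on [0, ∞)
  have hconc : ConcaveOn ℝ (Set.Ici 0) fun x : ℝ => x ^ c :=
    Real.concaveOn_rpow hc0.le hc1
  have hcont : ContinuousOn (fun x : ℝ => x ^ c) (Set.Ici 0) := fun x hx =>
    (Real.continuousAt_rpow_const x c (Or.inr hc0.le)).continuousWithinAt
  have hmem : ∀ᵐ ω ∂P, Real.exp ((t / m₁) * H ω) ∈ Set.Ici (0 : ℝ) :=
    Filter.Eventually.of_forall fun ω => (Real.exp_pos _).le
  have hint2 : Integrable (fun ω => Real.exp ((t / m₂) * H ω)) P := by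
    refine hint.mono ?_ ?_ 
    · exact ((hmeas.const_mul _).exp).aestronglyMeasurable
    · refine Filter.Eventually.of_forall fun ω => ?_
      rw [Real.norm_eq_abs, Real.norm_eq_abs, abs_of_pos (Real.exp_pos _),
        abs_of_pos (Real.exp_pos _)]
      exact Real.exp_le_exp.mpr (mul_le_mul_of_nonneg_right
        (div_le_div_of_nonneg_left ht hm₁ hm) (hnonneg ω))
  have hjensen : (∫ ω, (Real.exp ((t / m₁) * H ω)) ^ c ∂P)
      ≤ (∫ ω, Real.exp ((t / m₁) * H ω) ∂P) ^ c := by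
    refine hconc.le_map_integral hcont isClosed_Ici hmem hint ?_
    simpa [Function.comp_def, hkey] using hint2
  have hI2 : (∫ ω, Real.exp ((t / m₂) * H ω) ∂P)
      = ∫ ω, (Real.exp ((t / m₁) * H ω)) ^ c ∂P := by
    simp_rw [hkey]
  have hI1nonneg : 0 ≤ ∫ ω, Real.exp ((t / m₁) * H ω) ∂P :=
    integral_nonneg fun ω => (Real.exp_pos _).le
  have hI2nonneg : 0 ≤ ∫ ω, Real.exp ((t / m₂) * H ω) ∂P :=
    integral_nonneg fun ω => (Real.exp_pos _).le
  calc (∫ ω, Real.exp ((t / m₂) * H ω) ∂P) ^ m₂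
      ≤ ((∫ ω, Real.exp ((t / m₁) * H ω) ∂P) ^ c) ^ m₂ := by
        refine Real.rpow_le_rpow hI2nonneg ?_ hm₂.le
        rw [hI2]; exact hjensen
    _ = (∫ ω, Real.exp ((t / m₁) * H ω) ∂P) ^ m₁ := by
        rw [← Real.rpow_mul hI1nonneg, hc, div_mul_cancel₀ _ hm₂.ne']
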